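/- Let π₁ and π₂ be anisotropic quasi-Pfister forms over F. Then π₁ ⊆ π₂ if and only if π₂ ≃ π₁ ⊗ γ for some diagonal quasilinear p-form γ over F; moreover, in that case γ can be chosen to be a quasi-Pfister form. -/

import Mathlib

/-!
Diagonal quasilinear `p`-forms over a field `F` of characteristic `p`,
following Hoffmann and Zemková. A form of dimension `n` is recorded by its
coefficient tuple `a : ι → F` (for a finite index type `ι`), the form being
`x ↦ ∑ i, a i * (x i)^p`.
-/

universe u

namespace QLF

open scoped BigOperators

/-- Evaluation of the diagonal quasilinear `p`-form with coefficients `a` at `x`. -/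
def eval (p : ℕ) {F : Type*} [CommRing F] {ι : Type*} [Fintype ι]
    (a : ι → F) (x : ι → F) : F :=
  ∑ i, a i * x i ^ p

/-- A form is isotropic if it has a nontrivial zero. -/
def Isotropic (p : ℕ) {F : Type*} [CommRing F] {ι : Type*} [Fintype ι] (a : ι → F) : Prop :=
  ∃ x : ι → F, x ≠ 0 ∧ eval p a x = 0

/-- A form is anisotropic if it has no nontrivial zero. -/
def Anisotropic (p : ℕ) {F : Type*} [CommRing F] {ι : Type*} [Fintype ι] (a : ι → F) : Prop :=
  ¬ Isotropic p a

/-- In characteristic `p`, the zero set of a diagonal quasilinear `p`-form is a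
linear subspace. -/
def zeroSubmodule (p : ℕ) [Fact p.Prime] {F : Type*} [Field F] [CharP F p]
    {ι : Type*} [Fintype ι] (a : ι → F) : Submodule F (ι → F) where
  carrier := {x | eval p a x = 0}
  zero_mem' := by
    have hp : p ≠ 0 := (Fact.out : p.Prime).ne_zero
    simp [eval, zero_pow hp]
  add_mem' := by
    intro x y hx hy
    haveI : ExpChar F p := .prime Fact.out
    have hxy : eval p a (x + y) = eval p a x + eval p a y := by
      simp only [eval, Pi.add_apply]
      rw [← Finset.sum_add_distrib]
      exact Finset.sum_congr rfl fun i _ => by rw [add_pow_char, mul_add]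
    simp only [Set.mem_setOf_eq] at *
    rw [hxy, hx, hy, add_zero]
  smul_mem' := by
    intro c x hx
    simp only [Set.mem_setOf_eq] at *
    have hcx : eval p a (c • x) = c ^ p * eval p a x := by
      simp only [eval, Pi.smul_apply, smul_eq_mul, Finset.mul_sum]
      exact Finset.sum_congr rfl fun i _ => by rw [mul_pow]; ring
    rw [hcx, hx, mul_zero]

/-- The defect `i₀` of a form: the dimension of its zero set. -/
noncomputable def defect (p : ℕ) [Fact p.Prime] {F : Type*} [Field F] [CharP F p]
    {ι : Type*} [Fintype ι] (a : ι → F) : ℕ :=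
  Module.finrank F (zeroSubmodule p a)

/-- Isometry of forms: a linear bijection carrying one form into the other. -/
def Isometric (p : ℕ) {F : Type*} [Field F] {ι κ : Type*} [Fintype ι] [Fintype κ]
    (a : ι → F) (b : κ → F) : Prop :=
  ∃ T : (ι → F) ≃ₗ[F] (κ → F), ∀ x, eval p a x = eval p b (T x)

/-- `a` is a subform of `b`. -/
def Subform (p : ℕ) {F : Type*} [Field F] {ι κ : Type*} [Fintype ι] [Fintype κ]
    (a : ι → F) (b : κ → F) : Prop :=
  ∃ T : (ι → F) →ₗ[F] (κ → F), Function.Injective T ∧ ∀ x, eval p a x = eval p b (T x)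

/-- Similarity of forms: `a ≃ c·b` for some scalar `c ≠ 0`. -/
def Similar (p : ℕ) {F : Type*} [Field F] {ι κ : Type*} [Fintype ι] [Fintype κ]
    (a : ι → F) (b : κ → F) : Prop :=
  ∃ c : F, c ≠ 0 ∧ Isometric p a (fun i => c * b i)

/-- Vishik equivalence: same dimension, and equal defects over every field
extension `E/F`. -/
def VishikEquiv (p : ℕ) [Fact p.Prime] {F : Type u} [Field F] [CharP F p]
    {ι κ : Type*} [Fintype ι] [Fintype κ] (a : ι → F) (b : κ → F) : Prop :=
  Fintype.card ι = Fintype.card κ ∧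
    ∀ (E : Type u) [Field E] [CharP E p] (f : F →+* E),
      defect p (f ∘ a) = defect p (f ∘ b)

/-- Weak Vishik equivalence: same dimension, and equal defects over every field
extension of the shape `E = F(α)` with `αᵖ ∈ F` (this includes `E = F`). -/
def WeakVishikEquiv (p : ℕ) [Fact p.Prime] {F : Type u} [Field F] [CharP F p]
    {ι κ : Type*} [Fintype ι] [Fintype κ] (a : ι → F) (b : κ → F) : Prop :=
  Fintype.card ι = Fintype.card κ ∧
    ∀ (E : Type u) [Field E] [CharP E p] (f : F →+* E) (α : E),
      α ^ p ∈ Set.range ⇑f →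
      Subfield.closure (insert α (Set.range ⇑f)) = ⊤ →
      defect p (f ∘ a) = defect p (f ∘ b)

/-- The set `Fᵖ` of `p`-th powers. -/
def pSet (p : ℕ) (F : Type*) [Field F] : Set F := Set.range fun x : F => x ^ p

/-- The subfield `Fᵖ` of `p`-th powers (in characteristic `p` the set of `p`-th
powers is already a subfield, so the closure adds nothing). -/
def pthSubfield (p : ℕ) (F : Type*) [Field F] : Subfield F :=
  Subfield.closure (pSet p F)

/-- The subfield `Fᵖ(s)` generated by a set `s` over `Fᵖ`. -/
def adjoin (p : ℕ) {F : Type*} [Field F] (s : Set F) : Subfield F :=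
  Subfield.closure (pSet p F ∪ s)

/-- The degree `[N : k]` of a subfield `N` over a subfield `k` (for `k ≤ N`,
the `k`-span of `N` in `F` is `N` itself, so this is the `k`-dimension of `N`). -/
noncomputable def degOver {F : Type*} [Field F] (k : Subfield F) (N : Subfield F) : ℕ :=
  Module.finrank k (Submodule.span k (N : Set F))

/-- The set `D_F(φ)` of values of the form. -/
def values (p : ℕ) {F : Type*} [CommRing F] {ι : Type*} [Fintype ι] (a : ι → F) : Set F :=
  Set.range (eval p a)

/-- The norm field `N_F(φ)`: the subfield generated over `Fᵖ` by all quotients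
of nonzero values of `φ`. -/
def normField (p : ℕ) {F : Type*} [Field F] {ι : Type*} [Fintype ι] (a : ι → F) : Subfield F :=
  adjoin p {z : F | ∃ u ∈ values p a, ∃ v ∈ values p a, u ≠ 0 ∧ v ≠ 0 ∧ z = u / v}

/-- The norm degree `ndeg_F(φ) = [N_F(φ) : Fᵖ]`. -/
noncomputable def ndeg (p : ℕ) {F : Type*} [Field F] {ι : Type*} [Fintype ι] (a : ι → F) : ℕ :=
  degOver (pthSubfield p F) (normField p a)

/-- An anisotropic form is minimal if `ndeg_F(φ) = p^(dim φ - 1)`. -/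
def Minimal (p : ℕ) {F : Type*} [Field F] {ι : Type*} [Fintype ι] (a : ι → F) : Prop :=
  Anisotropic p a ∧ ndeg p a = p ^ (Fintype.card ι - 1)

/-- The quasi-Pfister form `⟪b₁,…,bₙ⟫`: its coefficients are all products
`b₁^{e₁}⋯bₙ^{eₙ}` with `0 ≤ eᵢ ≤ p-1`. -/
def pfister (p : ℕ) {F : Type*} [CommRing F] {n : ℕ} (b : Fin n → F) :
    (Fin n → Fin p) → F :=
  fun e => ∏ i, b i ^ (e i : ℕ)

/-- A form is a quasi-Pfister form if it is isometric to some `⟪b₁,…,bₙ⟫`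
with all `bᵢ ∈ F×`. -/
def IsQuasiPfister (p : ℕ) {F : Type*} [Field F] {ι : Type*} [Fintype ι] (a : ι → F) : Prop :=
  ∃ (n : ℕ) (b : Fin n → F), (∀ i, b i ≠ 0) ∧ Isometric p a (pfister p b)

/-- `a` is a quasi-Pfister neighbor of the form `π`: `c·a ⊆ π` for some `c ≠ 0`
and `p · dim a > dim π`. -/
def IsNeighborOf (p : ℕ) {F : Type*} [Field F] {ι κ : Type*} [Fintype ι] [Fintype κ]
    (a : ι → F) (π : κ → F) : Prop :=
  ∃ c : F, c ≠ 0 ∧ Subform p (fun i => c * a i) π ∧ p * Fintype.card ι > Fintype.card κ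

/-- `a` is a quasi-Pfister neighbor (of some quasi-Pfister form). -/
def IsQPNeighbor (p : ℕ) {F : Type*} [Field F] {ι : Type*} [Fintype ι] (a : ι → F) : Prop :=
  ∃ (n : ℕ) (b : Fin n → F), (∀ i, b i ≠ 0) ∧ IsNeighborOf p a (pfister p b)

/-- `a` is a quasi-Pfister neighbor of codimension one of some anisotropic
quasi-Pfister form: `dim π - dim a = 1`. -/
def IsQPNeighborCodimOne (p : ℕ) {F : Type*} [Field F] {ι : Type*} [Fintype ι]
    (a : ι → F) : Prop :=
  ∃ (n : ℕ) (b : Fin n → F), (∀ i, b i ≠ 0) ∧ Anisotropic p (pfister p b) ∧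
    IsNeighborOf p a (pfister p b) ∧ Fintype.card ι + 1 = p ^ n

/-- Tensor product of diagonal forms: coefficients `aᵢ · bⱼ`. -/
def tensor (p : ℕ) {F : Type*} [CommRing F] {ι κ : Type*}
    (a : ι → F) (b : κ → F) : ι × κ → F :=
  fun ik => a ik.1 * b ik.2

/-- The set `G_F(φ) = {x ∈ F× : xφ ≃ φ} ∪ {0}` of similarity factors. -/
def simFactors (p : ℕ) {F : Type*} [Field F] {ι : Type*} [Fintype ι] (a : ι → F) : Set F :=
  {x | x ≠ 0 ∧ Isometric p (fun i => x * a i) a} ∪ {0}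

/-- `b` is the anisotropic part of `a`: `b` is anisotropic and
`a ≃ b ⊥ (m × ⟨0⟩)` for some `m`. -/
def IsAnisotropicPart (p : ℕ) {F : Type*} [Field F] {ι κ : Type*} [Fintype ι] [Fintype κ]
    (a : ι → F) (b : κ → F) : Prop :=
  Anisotropic p b ∧ ∃ m : ℕ, Isometric p a (Sum.elim b fun _ : Fin m => (0 : F))

/-- `⟪c₁,…,cₘ⟫` is (a representative of) the norm form of `a`:
`N_F(a) = Fᵖ(c₁,…,cₘ)` and `ndeg_F(a) = pᵐ`. -/
def IsNormForm (p : ℕ) {F : Type*} [Field F] {ι : Type*} [Fintype ι] (a : ι → F)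
    {m : ℕ} (c : Fin m → F) : Prop :=
  normField p a = adjoin p (Set.range c) ∧ ndeg p a = p ^ m

end QLF

namespace QLFAux

open QLF Finset

section P1
variable {p : ℕ} [Fact p.Prime] {F : Type u} [Field F] [CharP F p]

/-! ### Basic lemmas about `eval` -/

theorem eval_add {ι : Type*} [Fintype ι] (a x y : ι → F) :
    eval p a (x + y) = eval p a x + eval p a y := by
  haveI : ExpChar F p := .prime Fact.out
  simp only [eval, Pi.add_apply, ← Finset.sum_add_distrib]
  exact Finset.sum_congr rfl fun i _ => by rw [add_pow_char, mul_add]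

theorem eval_sub {ι : Type*} [Fintype ι] (a x y : ι → F) :
    eval p a (x - y) = eval p a x - eval p a y := by
  haveI : ExpChar F p := .prime Fact.out
  simp only [eval, Pi.sub_apply, ← Finset.sum_sub_distrib]
  exact Finset.sum_congr rfl fun i _ => by rw [sub_pow_char, mul_sub]

theorem eval_smul {ι : Type*} [Fintype ι] (a : ι → F) (c : F) (x : ι → F) :
    eval p a (c • x) = c ^ p * eval p a x := by
  simp only [eval, Pi.smul_apply, smul_eq_mul, Finset.mul_sum]
  exact Finset.sum_congr rfl fun i _ => by rw [mul_pow]; ring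

theorem eval_zero {ι : Type*} [Fintype ι] (a : ι → F) : eval p a 0 = 0 := by
  simp [eval, zero_pow (Fact.out : p.Prime).ne_zero]

theorem aniso_inj {ι : Type*} [Fintype ι] {a : ι → F} (h : Anisotropic p a) :
    Function.Injective (eval p a) := by
  intro x y hxy
  by_contra hne
  exact h ⟨x - y, sub_ne_zero.mpr hne, by rw [eval_sub, hxy, sub_self]⟩

theorem eval_single {ι : Type*} [Fintype ι] [DecidableEq ι] (a : ι → F) (i₀ : ι) :
    eval p a (Pi.single i₀ (1 : F)) = a i₀ := by
  simp only [eval]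
  rw [Finset.sum_eq_single i₀]
  · simp
  · intro i _ hne
    rw [Pi.single_eq_of_ne hne, zero_pow (Fact.out : p.Prime).ne_zero, mul_zero]
  · intro h; exact absurd (Finset.mem_univ i₀) h

/-! ### From value ranges to subforms and isometries -/

theorem range_subset_of_subform {ι κ : Type*} [Fintype ι] [Fintype κ] {a : ι → F} {b : κ → F}
    (h : Subform p a b) : Set.range (eval p a) ⊆ Set.range (eval p b) := by
  obtain ⟨T, -, hT⟩ := h
  rintro v ⟨x, rfl⟩
  exact ⟨T x, (hT x).symm⟩

theorem range_eq_of_isometric {ι κ : Type*} [Fintype ι] [Fintype κ] {a : ι → F} {b : κ → F}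
    (h : Isometric p a b) : Set.range (eval p a) = Set.range (eval p b) := by
  obtain ⟨T, hT⟩ := h
  apply Set.eq_of_subset_of_subset
  · rintro v ⟨x, rfl⟩; exact ⟨T x, (hT x).symm⟩
  · rintro v ⟨y, rfl⟩; exact ⟨T.symm y, by rw [hT (T.symm y), T.apply_symm_apply]⟩

theorem aniso_of_isometric {ι κ : Type*} [Fintype ι] [Fintype κ] {a : ι → F} {b : κ → F}
    (h : Isometric p a b) (ha : Anisotropic p a) : Anisotropic p b := by
  obtain ⟨T, hT⟩ := h
  rintro ⟨x, hx0, hx⟩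
  refine ha ⟨T.symm x, fun h0 => hx0 ?_, by rw [hT (T.symm x), T.apply_symm_apply, hx]⟩
  have := congrArg T h0
  rwa [T.apply_symm_apply, map_zero] at this

theorem subform_of_range_subset {ι κ : Type*} [Fintype ι] [Fintype κ] {a : ι → F} {b : κ → F}
    (ha : Anisotropic p a) (hb : Anisotropic p b)
    (hr : Set.range (eval p a) ⊆ Set.range (eval p b)) : Subform p a b := by
  have hbi := aniso_inj hb
  have hai := aniso_inj ha
  choose T hT using fun x : ι → F => hr ⟨x, rfl⟩
  have hadd : ∀ x y, T (x + y) = T x + T y := fun x y =>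
    hbi (by rw [hT, eval_add, ← hT x, ← hT y, ← eval_add])
  have hsmul : ∀ (c : F) (x), T (c • x) = c • T x := fun c x =>
    hbi (by rw [hT, eval_smul, ← hT x, ← eval_smul])
  refine ⟨{ toFun := T, map_add' := hadd, map_smul' := hsmul }, ?_, fun x => (hT x).symm⟩
  intro x y hxy
  exact hai (by rw [← hT x, ← hT y]; exact congrArg (eval p b) hxy)

theorem isometric_of_range_eq {ι κ : Type*} [Fintype ι] [Fintype κ] {a : ι → F} {b : κ → F}
    (ha : Anisotropic p a) (hb : Anisotropic p b)
    (hr : Set.range (eval p a) = Set.range (eval p b)) : Isometric p a b := by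
  have hbi := aniso_inj hb
  have hai := aniso_inj ha
  choose T hT using fun x : ι → F => hr.subset ⟨x, rfl⟩
  choose S hS using fun y : κ → F => hr.superset ⟨y, rfl⟩
  have hadd : ∀ x y, T (x + y) = T x + T y := fun x y =>
    hbi (by rw [hT, eval_add, ← hT x, ← hT y, ← eval_add])
  have hsmul : ∀ (c : F) (x), T (c • x) = c • T x := fun c x =>
    hbi (by rw [hT, eval_smul, ← hT x, ← eval_smul])
  refine ⟨{ toFun := T, map_add' := hadd, map_smul' := hsmul, invFun := S,
            left_inv := fun x => hai (by rw [hS, hT]),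
            right_inv := fun y => hbi (by rw [hT, hS]) }, fun x => (hT x).symm⟩

theorem isometric_symm {ι κ : Type*} [Fintype ι] [Fintype κ] {a : ι → F} {b : κ → F}
    (h : Isometric p a b) : Isometric p b a := by
  obtain ⟨T, hT⟩ := h
  exact ⟨T.symm, fun y => by rw [hT (T.symm y), T.apply_symm_apply]⟩

theorem isometric_trans {ι κ ν : Type*} [Fintype ι] [Fintype κ] [Fintype ν]
    {a : ι → F} {b : κ → F} {c : ν → F}
    (h1 : Isometric p a b) (h2 : Isometric p b c) : Isometric p a c := by
  obtain ⟨T1, hT1⟩ := h1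
  obtain ⟨T2, hT2⟩ := h2
  exact ⟨T1.trans T2, fun x => by rw [hT1, hT2]; rfl⟩

theorem isometric_comp {ι ι' : Type*} [Fintype ι] [Fintype ι'] (a : ι → F) (ρ : ι' ≃ ι) :
    Isometric p (a ∘ ρ) a := by
  refine ⟨LinearEquiv.funCongrLeft F F ρ.symm, fun x => ?_⟩
  have : ∀ y : ι → F, eval p a y = ∑ i' : ι', a (ρ i') * y (ρ i') ^ p :=
    fun y => (Equiv.sum_comp ρ fun i => a i * y i ^ p).symm
  rw [this]
  refine Finset.sum_congr rfl fun i' _ => ?_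
  congr 1
  simp [LinearEquiv.funCongrLeft]

/-! ### Pfister coefficient lemmas -/

theorem pfister_zero {n : ℕ} (b : Fin n → F) : pfister p b 0 = 1 := by
  haveI : NeZero p := ⟨(Fact.out : p.Prime).ne_zero⟩
  simp [pfister]

theorem pfister_single {n : ℕ} (b : Fin n → F) (i : Fin n) :
    pfister p b (Pi.single i 1) = b i := by
  haveI : NeZero p := ⟨(Fact.out : p.Prime).ne_zero⟩
  have h1 : ((1 : Fin p) : ℕ) = 1 := by
    rw [Fin.val_one']
    exact Nat.mod_eq_of_lt (Fact.out : p.Prime).one_lt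
  rw [pfister, Finset.prod_eq_single i]
  · rw [Pi.single_eq_same, h1, pow_one]
  · intro j _ hj
    rw [Pi.single_eq_of_ne hj]
    simp
  · intro h; exact absurd (Finset.mem_univ i) h

theorem pfister_mul {n : ℕ} (b : Fin n → F) (e f : Fin n → Fin p) :
    pfister p b e * pfister p b f =
      pfister p b (e + f) * (∏ i, b i ^ (((e i : ℕ) + (f i : ℕ)) / p)) ^ p := by
  haveI : NeZero p := ⟨(Fact.out : p.Prime).ne_zero⟩
  simp only [pfister, ← Finset.prod_mul_distrib, ← Finset.prod_pow]
  refine Finset.prod_congr rfl fun i _ => ?_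
  rw [← pow_add, ← pow_mul, ← pow_add, Pi.add_apply, Fin.val_add]
  congr 1
  exact (Nat.mod_add_div' _ p).symm

end P1

section P2
variable (p : ℕ) [Fact p.Prime] {F : Type u} [Field F] [CharP F p]

/-! ### The subfield of `p`-th powers -/

/-- The subfield `Fᵖ` of `p`-th powers. -/
def KP (p : ℕ) (F : Type u) [Field F] [CharP F p] [Fact p.Prime] : Subfield F where
  carrier := {x : F | ∃ y : F, y ^ p = x}
  one_mem' := ⟨1, one_pow p⟩
  zero_mem' := ⟨0, zero_pow (Fact.out : p.Prime).ne_zero⟩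
  mul_mem' := by rintro a b ⟨x, rfl⟩ ⟨y, rfl⟩; exact ⟨x * y, mul_pow x y p⟩
  add_mem' := by
    haveI : ExpChar F p := .prime Fact.out
    rintro a b ⟨x, rfl⟩ ⟨y, rfl⟩
    exact ⟨x + y, add_pow_expChar x y p⟩
  neg_mem' := by
    haveI : ExpChar F p := .prime Fact.out
    rintro a ⟨x, rfl⟩
    exact ⟨-x, by rw [← neg_one_mul x, mul_pow, neg_one_pow_expChar, neg_one_mul]⟩
  inv_mem' := by rintro a ⟨x, rfl⟩; exact ⟨x⁻¹, inv_pow x p⟩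

theorem mem_KP {x : F} : x ∈ KP p F ↔ ∃ y : F, y ^ p = x := Iff.rfl

theorem pow_mem_KP (x : F) : x ^ p ∈ KP p F := ⟨x, rfl⟩

/-! ### `K`-spans of Pfister monomials -/

/-- The set of `K`-linear combinations of the Pfister monomials of `b`. -/
def monSpanSet (K : Subfield F) {m : ℕ} (b : Fin m → F) : Set F :=
  {x | ∃ l : (Fin m → Fin p) → F, (∀ f, l f ∈ K) ∧ x = ∑ f, l f * pfister p b f}

theorem monSpanSet_mul (K : Subfield F) (hK : ∀ x : F, x ^ p ∈ K) {m : ℕ} (b : Fin m → F)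
    {x y : F} (hx : x ∈ monSpanSet p K b) (hy : y ∈ monSpanSet p K b) :
    x * y ∈ monSpanSet p K b := by
  classical
  obtain ⟨l, hl, rfl⟩ := hx
  obtain ⟨l', hl', rfl⟩ := hy
  refine ⟨fun h => ∑ q : (Fin m → Fin p) × (Fin m → Fin p),
    if q.1 + q.2 = h then l q.1 * l' q.2 * (∏ i, b i ^ (((q.1 i : ℕ) + (q.2 i : ℕ)) / p)) ^ p
    else 0, fun h => Subfield.sum_mem _ fun q _ => ?_, ?_⟩
  · split
    · exact K.mul_mem (K.mul_mem (hl _) (hl' _)) (hK _)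
    · exact K.zero_mem
  · calc
      (∑ f, l f * pfister p b f) * (∑ f, l' f * pfister p b f)
          = ∑ q : (Fin m → Fin p) × (Fin m → Fin p),
              (l q.1 * pfister p b q.1) * (l' q.2 * pfister p b q.2) := by
            rw [Fintype.sum_prod_type]
            exact Finset.sum_mul_sum _ _ _ _
      _ = ∑ q : (Fin m → Fin p) × (Fin m → Fin p),
              (l q.1 * l' q.2 * (∏ i, b i ^ (((q.1 i : ℕ) + (q.2 i : ℕ)) / p)) ^ p)
                * pfister p b (q.1 + q.2) := by
            refine Finset.sum_congr rfl fun q _ => ?_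
            rw [show (l q.1 * pfister p b q.1) * (l' q.2 * pfister p b q.2)
                = l q.1 * l' q.2 * (pfister p b q.1 * pfister p b q.2) by ring,
              pfister_mul]
            ring
      _ = ∑ q : (Fin m → Fin p) × (Fin m → Fin p), ∑ h : Fin m → Fin p,
              (if q.1 + q.2 = h then l q.1 * l' q.2 *
                (∏ i, b i ^ (((q.1 i : ℕ) + (q.2 i : ℕ)) / p)) ^ p else 0) * pfister p b h := by
            refine Finset.sum_congr rfl fun q _ => ?_
            simp only [ite_mul, zero_mul]
            rw [Finset.sum_ite_eq Finset.univ (q.1 + q.2)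
              (fun h => l q.1 * l' q.2 * (∏ i, b i ^ (((q.1 i : ℕ) + (q.2 i : ℕ)) / p)) ^ p
                * pfister p b h)]
            simp
      _ = ∑ h : Fin m → Fin p, (∑ q : (Fin m → Fin p) × (Fin m → Fin p),
              if q.1 + q.2 = h then l q.1 * l' q.2 *
                (∏ i, b i ^ (((q.1 i : ℕ) + (q.2 i : ℕ)) / p)) ^ p else 0) * pfister p b h := by
            rw [Finset.sum_comm]
            refine Finset.sum_congr rfl fun h _ => ?_
            rw [Finset.sum_mul]

/-- The `K`-span of the Pfister monomials of `b` as a subfield (when `Fᵖ ⊆ K`). -/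
def spanMon (K : Subfield F) (hK : ∀ x : F, x ^ p ∈ K)
    {m : ℕ} (b : Fin m → F) : Subfield F where
  carrier := monSpanSet p K b
  one_mem' := by
    classical
    refine ⟨fun f => if f = 0 then 1 else 0, fun f => ?_, ?_⟩
    · dsimp only
      split
      · exact K.one_mem
      · exact K.zero_mem
    · simp only [ite_mul, zero_mul]
      rw [Finset.sum_ite_eq' Finset.univ (0 : Fin m → Fin p) (fun f => 1 * pfister p b f)]
      simp [pfister_zero]
  zero_mem' := ⟨0, fun f => K.zero_mem, by simp⟩
  mul_mem' := fun hx hy => monSpanSet_mul p K hK b hx hy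
  add_mem' := by
    rintro x y ⟨l, hl, rfl⟩ ⟨l', hl', rfl⟩
    exact ⟨l + l', fun f => K.add_mem (hl f) (hl' f), by
      rw [← Finset.sum_add_distrib]
      exact Finset.sum_congr rfl fun f _ => by rw [Pi.add_apply, add_mul]⟩
  neg_mem' := by
    rintro x ⟨l, hl, rfl⟩
    exact ⟨-l, fun f => K.neg_mem (hl f), by
      rw [← Finset.sum_neg_distrib]
      exact Finset.sum_congr rfl fun f _ => by rw [Pi.neg_apply, neg_mul]⟩
  inv_mem' := by
    intro x hx
    rcases eq_or_ne x 0 with rfl | hx0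
    · rw [inv_zero]; exact ⟨0, fun f => K.zero_mem, by simp⟩
    · have hpow : ∀ n : ℕ, x ^ n ∈ monSpanSet p K b := by
        intro n
        induction n with
        | zero =>
          rw [pow_zero]
          classical
          refine ⟨fun f => if f = 0 then 1 else 0, fun f => ?_, ?_⟩
          · dsimp only
            split
            · exact K.one_mem
            · exact K.zero_mem
          · simp only [ite_mul, zero_mul]
            rw [Finset.sum_ite_eq' Finset.univ (0 : Fin m → Fin p) (fun f => 1 * pfister p b f)]
            simp [pfister_zero]
        | succ n ih => rw [pow_succ]; exact monSpanSet_mul p K hK b ih hx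
      have hinv : x⁻¹ = (x⁻¹) ^ p * x ^ (p - 1) := by
        have h1 : x ^ (p - 1) * x = x ^ p := by
          rw [← pow_succ, Nat.sub_add_cancel (Fact.out : p.Prime).one_le]
        rw [inv_pow, ← h1, mul_inv_rev, mul_assoc, inv_mul_cancel₀ (pow_ne_zero _ hx0), mul_one]
      rw [hinv]
      obtain ⟨l, hl, hleq⟩ := hpow (p - 1)
      refine ⟨fun f => (x⁻¹) ^ p * l f, fun f => K.mul_mem (hK _) (hl f), ?_⟩
      rw [hleq, Finset.mul_sum]
      exact Finset.sum_congr rfl fun f _ => by ring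

theorem mem_spanMon {K : Subfield F} {hK : ∀ x : F, x ^ p ∈ K} {m : ℕ} {b : Fin m → F} {x : F} :
    x ∈ spanMon p K hK b ↔
      ∃ l : (Fin m → Fin p) → F, (∀ f, l f ∈ K) ∧ x = ∑ f, l f * pfister p b f :=
  Iff.rfl

theorem K_le_spanMon (K : Subfield F) (hK : ∀ x : F, x ^ p ∈ K) {m : ℕ} (b : Fin m → F)
    {x : F} (hx : x ∈ K) : x ∈ spanMon p K hK b := by
  classical
  refine ⟨fun f => if f = 0 then x else 0, fun f => ?_, ?_⟩
  · dsimp only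
    split
    · exact hx
    · exact K.zero_mem
  · simp only [ite_mul, zero_mul]
    rw [Finset.sum_ite_eq' Finset.univ (0 : Fin m → Fin p) (fun f => x * pfister p b f)]
    simp [pfister_zero]

theorem mon_mem_spanMon (K : Subfield F) (hK : ∀ x : F, x ^ p ∈ K) {m : ℕ} (b : Fin m → F)
    (f₀ : Fin m → Fin p) : pfister p b f₀ ∈ spanMon p K hK b := by
  classical
  refine ⟨fun f => if f = f₀ then 1 else 0, fun f => ?_, ?_⟩
  · dsimp only
    split
    · exact K.one_mem
    · exact K.zero_mem
  · simp only [ite_mul, zero_mul]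
    rw [Finset.sum_ite_eq' Finset.univ f₀ (fun f => 1 * pfister p b f)]
    simp

theorem coeff_mem_spanMon (K : Subfield F) (hK : ∀ x : F, x ^ p ∈ K) {m : ℕ} (b : Fin m → F)
    (i : Fin m) : b i ∈ spanMon p K hK b := by
  classical
  have := mon_mem_spanMon p K hK b (Pi.single i 1)
  rwa [pfister_single] at this

theorem spanMon_mono {K K' : Subfield F} (hKK' : K ≤ K') (hK : ∀ x : F, x ^ p ∈ K)
    (hK' : ∀ x : F, x ^ p ∈ K') {m : ℕ} (b : Fin m → F) :
    spanMon p K hK b ≤ spanMon p K' hK' b := by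
  rintro x ⟨l, hl, rfl⟩
  exact ⟨l, fun f => hKK' (hl f), rfl⟩

theorem spanMon_le (K : Subfield F) (hK : ∀ x : F, x ^ p ∈ K) {m : ℕ} (b : Fin m → F)
    (W : Subfield F) (hKW : K ≤ W) (hbW : ∀ i, b i ∈ W) : spanMon p K hK b ≤ W := by
  rintro x ⟨l, hl, rfl⟩
  exact Subfield.sum_mem _ fun f _ =>
    W.mul_mem (hKW (hl f)) (Subfield.prod_mem _ fun i _ => W.pow_mem (hbW i) _)

/-- The range of an anisotropic (or any) quasi-Pfister form equals the
`Fᵖ`-span of its monomials. -/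
theorem range_eval_pfister {m : ℕ} (b : Fin m → F) :
    Set.range (eval p (pfister p b)) = (spanMon p (KP p F) (pow_mem_KP p) b : Set F) := by
  ext v
  constructor
  · rintro ⟨x, rfl⟩
    exact ⟨fun f => x f ^ p, fun f => ⟨x f, rfl⟩,
      Finset.sum_congr rfl fun f _ => by rw [mul_comm]⟩
  · rintro ⟨l, hl, rfl⟩
    choose y hy using hl
    refine ⟨y, Finset.sum_congr rfl fun f _ => ?_⟩
    rw [← hy f, mul_comm]

/-! ### Splitting off one Pfister slot -/

theorem sum_pi_succ {m : ℕ} (h : (Fin (m + 1) → Fin p) → F) :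
    ∑ g, h g = ∑ i : Fin p, ∑ f : Fin m → Fin p, h (Fin.cons i f) := by
  have h1 : ∑ q : Fin p × (Fin m → Fin p), h (Fin.consEquiv (fun _ => Fin p) q) = ∑ g, h g :=
    Equiv.sum_comp _ h
  rw [← h1, Fintype.sum_prod_type]
  rfl

theorem pfister_cons {m : ℕ} (β : F) (b' : Fin m → F) (i : Fin p) (f : Fin m → Fin p) :
    pfister p (Fin.cons β b') (Fin.cons i f) = β ^ (i : ℕ) * pfister p b' f := by
  simp [pfister, Fin.prod_univ_succ]

theorem mem_spanMon_cons {K : Subfield F} {hK : ∀ x : F, x ^ p ∈ K} {m : ℕ}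
    {β : F} {b' : Fin m → F} {x : F} :
    x ∈ spanMon p K hK (Fin.cons β b') ↔
      ∃ μ : Fin p → F, (∀ i, μ i ∈ spanMon p K hK b') ∧
        x = ∑ i : Fin p, μ i * β ^ (i : ℕ) := by
  constructor
  · rintro ⟨l, hl, rfl⟩
    refine ⟨fun i => ∑ f, l (Fin.cons i f) * pfister p b' f,
      fun i => ⟨fun f => l (Fin.cons i f), fun f => hl _, rfl⟩, ?_⟩
    rw [sum_pi_succ p (fun g => l g * pfister p (Fin.cons β b') g)]
    refine Finset.sum_congr rfl fun i _ => ?_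
    rw [Finset.sum_mul]
    refine Finset.sum_congr rfl fun f _ => ?_
    rw [pfister_cons]; ring
  · rintro ⟨μ, hμ, rfl⟩
    have hμ' : ∀ i, ∃ l : (Fin m → Fin p) → F, (∀ f, l f ∈ K) ∧
        μ i = ∑ f, l f * pfister p b' f := fun i => hμ i
    choose l hlK hlv using hμ'
    refine ⟨fun g => l (g 0) (Fin.tail g), fun g => hlK _ _, ?_⟩
    rw [sum_pi_succ p (fun g => l (g 0) (Fin.tail g) * pfister p (Fin.cons β b') g)]
    refine Finset.sum_congr rfl fun i _ => ?_
    rw [hlv i, Finset.sum_mul]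
    refine Finset.sum_congr rfl fun f _ => ?_
    rw [Fin.cons_zero, Fin.tail_cons, pfister_cons]; ring

/-! ### The Kummer (purely inseparable degree-`p`) step -/

theorem kummer_indep (K : Subfield F) (β : F) (hβp : β ^ p ∈ K) (hβK : β ∉ K) :
    ∀ l : Fin p → F, (∀ i, l i ∈ K) → ∑ i : Fin p, l i * β ^ (i : ℕ) = 0 → ∀ i, l i = 0 := by
  classical
  haveI : ExpChar F p := .prime Fact.out
  haveI : ExpChar (Polynomial F) p := .prime Fact.out
  have hp : p.Prime := Fact.out
  have hβ0 : β ≠ 0 := fun h => hβK (h ▸ K.zero_mem)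
  -- β is integral over K
  have hint : IsIntegral K β := by
    refine ⟨Polynomial.X ^ p - Polynomial.C ⟨β ^ p, hβp⟩,
      Polynomial.monic_X_pow_sub_C _ hp.ne_zero, ?_⟩
    simp only [Polynomial.eval₂_sub, Polynomial.eval₂_X_pow, Polynomial.eval₂_C]
    show β ^ p - algebraMap K F ⟨β ^ p, hβp⟩ = 0
    rw [show algebraMap K F ⟨β ^ p, hβp⟩ = β ^ p from rfl, sub_self]
  set g := minpoly K β with hg
  set d := g.natDegree with hd
  have hd0 : 0 < d := minpoly.natDegree_pos hint
  -- the image of the minimal polynomial in F[X] divides (X - β)^p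
  have hdvd : g.map (algebraMap K F) ∣ (Polynomial.X - Polynomial.C β) ^ p := by
    have h1 : g ∣ Polynomial.X ^ p - Polynomial.C ⟨β ^ p, hβp⟩ := by
      apply minpoly.dvd
      simp only [map_sub, Polynomial.aeval_X_pow, Polynomial.aeval_C]
      rw [show algebraMap K F ⟨β ^ p, hβp⟩ = β ^ p from rfl, sub_self]
    have h2 := Polynomial.map_dvd (algebraMap K F) h1
    rw [Polynomial.map_sub, Polynomial.map_pow, Polynomial.map_X, Polynomial.map_C,
      show algebraMap K F ⟨β ^ p, hβp⟩ = β ^ p from rfl] at h2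
    rwa [Polynomial.C_pow, ← sub_pow_char Polynomial.X (Polynomial.C β)] at h2
  obtain ⟨i, hip, hassoc⟩ := (dvd_prime_pow (Polynomial.prime_X_sub_C β) p).mp hdvd
  have heq : g.map (algebraMap K F) = (Polynomial.X - Polynomial.C β) ^ i :=
    Polynomial.eq_of_monic_of_associated ((minpoly.monic hint).map _)
      ((Polynomial.monic_X_sub_C β).pow i) hassoc
  have hid : i = d := by
    have := congrArg Polynomial.natDegree heq
    rwa [Polynomial.natDegree_map, Polynomial.natDegree_pow, Polynomial.natDegree_X_sub_C,
      mul_one, ← hd, eq_comm] at this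
  -- constant coefficient gives β ^ d ∈ K
  have hconst : (-β) ^ d ∈ K := by
    have h1 : (g.map (algebraMap K F)).coeff 0 = ((g.coeff 0 : K) : F) := by
      rw [Polynomial.coeff_map]; rfl
    have h2 : (g.map (algebraMap K F)).coeff 0 = (-β) ^ d := by
      rw [heq, hid, Polynomial.coeff_zero_eq_eval_zero]
      simp
    rw [← h2, h1]
    exact SetLike.coe_mem _
  have hbd : β ^ d ∈ K := by
    have h1 : ((-1 : F)) ^ d ∈ K := K.pow_mem (K.neg_mem K.one_mem) d
    have h2 : (-β) ^ d = (-1 : F) ^ d * β ^ d := by rw [← neg_one_mul β, mul_pow]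
    have h3 : β ^ d = (-1 : F) ^ d * (-β) ^ d := by
      rw [h2, ← mul_assoc, ← mul_pow, neg_one_mul, neg_neg, one_pow, one_mul]
    rw [h3]
    exact K.mul_mem h1 hconst
  -- d = p
  have hdp : d = p := by
    by_contra hne
    have hdlt : d < p := lt_of_le_of_ne (hid ▸ hip) hne
    apply hβK
    have hcop : Nat.gcd p d = 1 := (Nat.Prime.coprime_iff_not_dvd hp).mpr
      (fun hdvd' => absurd (Nat.le_of_dvd hd0 hdvd') (not_le.mpr hdlt))
    have h1 : (1 : ℤ) = p * Nat.gcdA p d + d * Nat.gcdB p d := by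
      have hbez := Nat.gcd_eq_gcd_ab p d
      rw [hcop] at hbez
      exact_mod_cast hbez
    have hzpow : β = (β ^ (p : ℤ)) ^ Nat.gcdA p d * (β ^ (d : ℤ)) ^ Nat.gcdB p d := by
      rw [← zpow_mul, ← zpow_mul, ← zpow_add₀ hβ0, ← h1, zpow_one]
    have hm1 : (β ^ (p : ℤ)) ^ Nat.gcdA p d ∈ K := K.zpow_mem (by rwa [zpow_natCast]) _
    have hm2 : (β ^ (d : ℤ)) ^ Nat.gcdB p d ∈ K := K.zpow_mem (by rwa [zpow_natCast]) _
    rw [hzpow]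
    exact K.mul_mem hm1 hm2
  have li : LinearIndependent K fun i : Fin p => β ^ (i : ℕ) := by
    have h := linearIndependent_pow (K := K) (S := F) β
    rw [← hg, ← hd] at h
    exact hdp ▸ h
  intro l hl hsum i
  have hz : ∑ i : Fin p, (⟨l i, hl i⟩ : K) • β ^ (i : ℕ) = (0 : F) := by
    rw [Finset.sum_congr rfl fun i _ => Subfield.smul_def (⟨l i, hl i⟩ : K) (β ^ (i:ℕ))]
    exact hsum
  have := Fintype.linearIndependent_iff.mp li (fun i => ⟨l i, hl i⟩) hz i
  exact congrArg Subtype.val this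

/-! ### Construction of a Pfister monomial basis (Lemma B) -/

theorem lemB (K : Subfield F) (hK : ∀ x : F, x ^ p ∈ K) :
    ∀ (m : ℕ) (b : Fin m → F), (∀ i, b i ≠ 0) →
      ∃ (k : ℕ) (c : Fin k → F), (∀ j, c j ≠ 0) ∧
        spanMon p K hK b = spanMon p K hK c ∧
        ∀ l : (Fin k → Fin p) → F, (∀ t, l t ∈ K) →
          ∑ t, l t * pfister p c t = 0 → ∀ t, l t = 0 := by
  intro m
  induction m with
  | zero =>
    intro b hb
    refine ⟨0, b, hb, rfl, ?_⟩
    intro l hl hsum t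
    have h1 : ∑ t' : Fin 0 → Fin p, l t' * pfister p b t' = l t * pfister p b t := by
      refine Finset.sum_eq_single_of_mem t (Finset.mem_univ t) ?_
      intro t' _ hne
      exact absurd (funext fun i => i.elim0 : t' = t) hne
    have h2 : pfister p b t = 1 := by simp [pfister]
    rw [h1, h2, mul_one] at hsum
    exact hsum
  | succ m IH =>
    intro b hb
    obtain ⟨k, c, hc, hspan, hindep⟩ := IH (Fin.tail b) (fun i => hb _)
    have hcons : Fin.cons (b 0) (Fin.tail b) = b := Fin.cons_self_tail b
    haveI : NeZero p := ⟨(Fact.out : p.Prime).ne_zero⟩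
    by_cases hβ : b 0 ∈ spanMon p K hK c
    · refine ⟨k, c, hc, ?_, hindep⟩
      rw [← hcons]
      apply le_antisymm
      · intro x hx
        rw [mem_spanMon_cons] at hx
        obtain ⟨μ, hμ, rfl⟩ := hx
        exact Subfield.sum_mem _ fun i _ => mul_mem (hspan ▸ hμ i) (pow_mem hβ _)
      · intro x hx
        rw [mem_spanMon_cons]
        refine ⟨fun i => if i = 0 then x else 0, fun i => ?_, ?_⟩
        · dsimp only
          split
          · rw [hspan]; exact hx
          · exact zero_mem _
        · simp only [ite_mul, zero_mul]
          rw [Finset.sum_ite_eq' Finset.univ (0 : Fin p) (fun i => x * (b 0) ^ (i : ℕ))]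
          simp
    · refine ⟨k + 1, Fin.cons (b 0) c, ?_, ?_, ?_⟩
      · intro j
        refine Fin.cases ?_ ?_ j
        · rw [Fin.cons_zero]; exact hb 0
        · intro i; rw [Fin.cons_succ]; exact hc i
      · rw [← hcons]
        apply le_antisymm
        · intro x hx
          rw [mem_spanMon_cons] at hx
          obtain ⟨μ, hμ, rfl⟩ := hx
          rw [mem_spanMon_cons]
          exact ⟨μ, fun i => hspan ▸ hμ i, rfl⟩
        · intro x hx
          rw [mem_spanMon_cons] at hx
          obtain ⟨μ, hμ, rfl⟩ := hx
          rw [mem_spanMon_cons]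
          exact ⟨μ, fun i => hspan.symm ▸ hμ i, rfl⟩
      · intro l hl hsum t
        have hsum2 : ∑ i : Fin p, (∑ f, l (Fin.cons i f) * pfister p c f) * (b 0) ^ (i : ℕ)
            = 0 := by
          rw [← hsum, sum_pi_succ p (fun g => l g * pfister p (Fin.cons (b 0) c) g)]
          refine Finset.sum_congr rfl fun i _ => ?_
          rw [Finset.sum_mul]
          refine Finset.sum_congr rfl fun f _ => ?_
          rw [pfister_cons]; ring
        have hμmem : ∀ i : Fin p,
            (∑ f, l (Fin.cons i f) * pfister p c f) ∈ spanMon p K hK c :=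
          fun i => ⟨fun f => l (Fin.cons i f), fun f => hl _, rfl⟩
        have hβp' : (b 0) ^ p ∈ spanMon p K hK c := K_le_spanMon p K hK c (hK (b 0))
        have h0 := kummer_indep p (spanMon p K hK c) (b 0) hβp' hβ _ hμmem hsum2
        have h1 := hindep (fun f => l (Fin.cons (t 0) f)) (fun f => hl _) (h0 (t 0)) (Fin.tail t)
        rwa [Fin.cons_self_tail] at h1

/-! ### Tensor product computations -/

theorem eval_tensor {ι κ : Type*} [Fintype ι] [Fintype κ] (a : ι → F) (d : κ → F)
    (x : ι × κ → F) :
    eval p (tensor p a d) x = ∑ j, (eval p a fun i => x (i, j)) * d j := by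
  simp only [eval, tensor]
  rw [Fintype.sum_prod_type, Finset.sum_comm]
  refine Finset.sum_congr rfl fun j _ => ?_
  rw [Finset.sum_mul]
  exact Finset.sum_congr rfl fun i _ => by ring

theorem eval_tensor_col {ι κ : Type*} [Fintype ι] [Fintype κ] [DecidableEq κ]
    (a : ι → F) (d : κ → F) (j₀ : κ) (y : ι → F) :
    eval p (tensor p a d) (fun q => if q.2 = j₀ then y q.1 else 0) = d j₀ * eval p a y := by
  rw [eval_tensor]
  rw [Finset.sum_eq_single j₀]
  · have h1 : (fun i => if ((i, j₀) : ι × κ).2 = j₀ then y i else 0) = y := by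
      funext i; simp
    rw [h1, mul_comm]
  · intro j _ hj
    have h2 : (eval p a fun i => if ((i, j) : ι × κ).2 = j₀ then y i else 0) = 0 := by
      simp only [if_neg hj]
      simp [eval, zero_pow (Fact.out : p.Prime).ne_zero]
    rw [h2, zero_mul]
  · intro h; exact absurd (Finset.mem_univ j₀) h

end P2

end QLFAux

/-- Let `π₁`, `π₂` be anisotropic quasi-Pfister forms over `F`.
Then `π₁ ⊆ π₂` iff `π₂ ≃ π₁ ⊗ γ` for some form `γ`; moreover in that case `γ` can be
chosen to be a quasi-Pfister form. -/
theorem stmt_13 (p : ℕ) [Fact p.Prime] {F : Type u} [Field F] [CharP F p]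
    {n m : ℕ} (ac : Fin n → F) (bc : Fin m → F)
    (hac : ∀ i, ac i ≠ 0) (hbc : ∀ i, bc i ≠ 0)
    (h1 : QLF.Anisotropic p (QLF.pfister p ac))
    (h2 : QLF.Anisotropic p (QLF.pfister p bc)) :
    (QLF.Subform p (QLF.pfister p ac) (QLF.pfister p bc) ↔
      ∃ (k : ℕ) (γ : Fin k → F),
        QLF.Isometric p (QLF.pfister p bc) (QLF.tensor p (QLF.pfister p ac) γ)) ∧
    (QLF.Subform p (QLF.pfister p ac) (QLF.pfister p bc) →
      ∃ (k : ℕ) (c : Fin k → F), (∀ i, c i ≠ 0) ∧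
        QLF.Isometric p (QLF.pfister p bc)
          (QLF.tensor p (QLF.pfister p ac) (QLF.pfister p c))) := by
  classical
  haveI : NeZero p := ⟨(Fact.out : p.Prime).ne_zero⟩
  set K : Subfield F := QLFAux.spanMon p (QLFAux.KP p F) (QLFAux.pow_mem_KP p) ac with hKdef
  set W : Subfield F := QLFAux.spanMon p (QLFAux.KP p F) (QLFAux.pow_mem_KP p) bc with hWdef
  have hr1 : Set.range (QLF.eval p (QLF.pfister p ac)) = (K : Set F) :=
    QLFAux.range_eval_pfister p ac
  have hr2 : Set.range (QLF.eval p (QLF.pfister p bc)) = (W : Set F) :=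
    QLFAux.range_eval_pfister p bc
  have hK : ∀ x : F, x ^ p ∈ K := fun x =>
    QLFAux.K_le_spanMon p _ _ ac (QLFAux.pow_mem_KP p x)
  -- The main construction, used for both parts.
  have main2 : QLF.Subform p (QLF.pfister p ac) (QLF.pfister p bc) →
      ∃ (k : ℕ) (c : Fin k → F), (∀ i, c i ≠ 0) ∧
        QLF.Isometric p (QLF.pfister p bc)
          (QLF.tensor p (QLF.pfister p ac) (QLF.pfister p c)) := by
    intro hsub
    have hVle : (K : Set F) ⊆ (W : Set F) := by
      rw [← hr1, ← hr2]
      exact QLFAux.range_subset_of_subform hsub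
    have hle : K ≤ W := fun x hx => hVle hx
    have hVW : QLFAux.spanMon p K hK bc = W := by
      apply le_antisymm
      · exact QLFAux.spanMon_le p K hK bc W hle
          (fun i => QLFAux.coeff_mem_spanMon p _ _ bc i)
      · exact QLFAux.spanMon_mono p
          (fun x hx => QLFAux.K_le_spanMon p _ _ ac hx) (QLFAux.pow_mem_KP p) hK bc
    obtain ⟨k, c, hc0, hspan, hindep⟩ := QLFAux.lemB p K hK m bc hbc
    have hcW : ∀ j, c j ∈ W := by
      intro j
      have hcj : c j ∈ QLFAux.spanMon p K hK c := QLFAux.coeff_mem_spanMon p K hK c j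
      rw [← hspan, hVW] at hcj
      exact hcj
    have hcoefK : ∀ (x : ((Fin n → Fin p) × (Fin k → Fin p)) → F) (t : Fin k → Fin p),
        QLF.eval p (QLF.pfister p ac) (fun e => x (e, t)) ∈ K := by
      intro x t
      have : QLF.eval p (QLF.pfister p ac) (fun e => x (e, t))
          ∈ Set.range (QLF.eval p (QLF.pfister p ac)) := Set.mem_range_self _
      rwa [hr1] at this
    have hrange : Set.range
        (QLF.eval p (QLF.tensor p (QLF.pfister p ac) (QLF.pfister p c))) = (W : Set F) := by
      apply Set.eq_of_subset_of_subset
      · rintro v ⟨x, rfl⟩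
        rw [QLFAux.eval_tensor, SetLike.mem_coe]
        refine Subfield.sum_mem _ fun t _ => mul_mem ?_ ?_
        · exact hle (hcoefK x t)
        · exact Subfield.prod_mem _ fun i _ => pow_mem (hcW i) _
      · intro v hv
        rw [SetLike.mem_coe, ← hVW, hspan, QLFAux.mem_spanMon] at hv
        obtain ⟨l, hl, rfl⟩ := hv
        have hex : ∀ t, ∃ y : (Fin n → Fin p) → F,
            QLF.eval p (QLF.pfister p ac) y = l t := by
          intro t
          have hlt : l t ∈ (K : Set F) := hl t
          rw [← hr1] at hlt
          exact hlt
        choose y hy using hex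
        refine ⟨fun q => y q.2 q.1, ?_⟩
        rw [QLFAux.eval_tensor]
        exact Finset.sum_congr rfl fun t _ => by rw [hy]
    have haniso : QLF.Anisotropic p
        (QLF.tensor p (QLF.pfister p ac) (QLF.pfister p c)) := by
      rintro ⟨x, hx0, hx⟩
      rw [QLFAux.eval_tensor] at hx
      have h0 := hindep _ (hcoefK x) hx
      apply hx0
      funext q
      have h3 : QLF.eval p (QLF.pfister p ac) (fun e => x (e, q.2))
          = QLF.eval p (QLF.pfister p ac) 0 := by
        rw [QLFAux.eval_zero, h0 q.2]
      exact congrFun (QLFAux.aniso_inj h1 h3) q.1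
    exact ⟨k, c, hc0, QLFAux.isometric_of_range_eq h2 haniso (by rw [hr2, hrange])⟩
  refine ⟨⟨?_, ?_⟩, main2⟩
  · -- forward: Subform → ∃ γ
    intro hsub
    obtain ⟨k, c, hc0, hiso⟩ := main2 hsub
    have hcard : Fintype.card (Fin k → Fin p) = p ^ k := by
      simp [Fintype.card_fun]
    let σ : (Fin k → Fin p) ≃ Fin (p ^ k) := Fintype.equivFinOfCardEq hcard
    refine ⟨p ^ k, QLF.pfister p c ∘ σ.symm, ?_⟩
    have hconv : QLF.tensor p (QLF.pfister p ac) (QLF.pfister p c ∘ σ.symm)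
        = QLF.tensor p (QLF.pfister p ac) (QLF.pfister p c) ∘
          (Equiv.prodCongr (Equiv.refl (Fin n → Fin p)) σ.symm) := by
      funext q
      simp [QLF.tensor]
    refine QLFAux.isometric_trans hiso ?_
    rw [hconv]
    exact QLFAux.isometric_symm
      (QLFAux.isometric_comp _ (Equiv.prodCongr (Equiv.refl (Fin n → Fin p)) σ.symm))
  · -- reverse: ∃ γ → Subform
    rintro ⟨k, γ, hiso⟩
    have haniso : QLF.Anisotropic p (QLF.tensor p (QLF.pfister p ac) γ) :=
      QLFAux.aniso_of_isometric hiso h2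
    have hrange : Set.range (QLF.eval p (QLF.pfister p bc))
        = Set.range (QLF.eval p (QLF.tensor p (QLF.pfister p ac) γ)) :=
      QLFAux.range_eq_of_isometric hiso
    have hk : Nonempty (Fin k) := by
      by_contra hek
      rw [not_nonempty_iff] at hek
      haveI : IsEmpty ((Fin n → Fin p) × Fin k) := ⟨fun q => hek.false q.2⟩
      obtain ⟨T, hT⟩ := hiso
      have h01 : (fun _ => (1 : F)) = (0 : (Fin m → Fin p) → F) :=
        T.injective (Subsingleton.elim _ _)
      exact one_ne_zero (congrFun h01 (fun _ => 0))
    obtain ⟨j₀⟩ := hk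
    have hγ0 : γ j₀ ≠ 0 := by
      intro hγ
      apply haniso
      refine ⟨Pi.single ((0 : Fin n → Fin p), j₀) 1, ?_, ?_⟩
      · intro h0
        have h01 := congrFun h0 ((0 : Fin n → Fin p), j₀)
        rw [Pi.single_eq_same] at h01
        exact one_ne_zero h01
      · rw [QLFAux.eval_single]
        show QLF.pfister p ac 0 * γ j₀ = 0
        rw [hγ, mul_zero]
    have hmul : ∀ v ∈ Set.range (QLF.eval p (QLF.pfister p ac)),
        γ j₀ * v ∈ Set.range (QLF.eval p (QLF.pfister p bc)) := by
      rintro v ⟨y, rfl⟩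
      rw [hrange]
      exact ⟨fun q => if q.2 = j₀ then y q.1 else 0,
        QLFAux.eval_tensor_col p (QLF.pfister p ac) γ j₀ y⟩
    have h1mem : (1 : F) ∈ Set.range (QLF.eval p (QLF.pfister p ac)) := by
      refine ⟨Pi.single 0 1, ?_⟩
      rw [QLFAux.eval_single, QLFAux.pfister_zero]
    have hγmem : γ j₀ ∈ W := by
      have hm := hmul 1 h1mem
      rw [mul_one, hr2, SetLike.mem_coe] at hm
      exact hm
    have hsubset : Set.range (QLF.eval p (QLF.pfister p ac))
        ⊆ Set.range (QLF.eval p (QLF.pfister p bc)) := by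
      intro v hv
      have h2m := hmul v hv
      rw [hr2, SetLike.mem_coe] at h2m ⊢
      have hveq : v = (γ j₀)⁻¹ * (γ j₀ * v) := by
        rw [← mul_assoc, inv_mul_cancel₀ hγ0, one_mul]
      rw [hveq]
      exact mul_mem (inv_mem hγmem) h2m
    exact QLFAux.subform_of_range_subset h1 h2 hsubset
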